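/- arXiv:2002.01455 — 5 statements merged into one kernel-verified Lean document; each statement's English description precedes it below -/
import Mathlib

section
/- For a support tuple α ∈ F_{2^m}^n, a Goppa polynomial g for α, and any nonzero a ∈ F_{2^m}, the Goppa codes Γ(α, g(x)) and Γ(a·α, g(a^{-1}·x)) are equal, where a·α = (aα_1,...,aα_n). -/
open Polynomial

lemma dvd_comp_linear_iff {F : Type*} [Field F] (b : F) (hb : b ≠ 0) (g p : Polynomial F) :
    g ∣ p ↔ g.comp (C b * X) ∣ p.comp (C b * X) := by
  have key : ∀ r : Polynomial F, (r.comp (C b * X)).comp (C b⁻¹ * X) = r := by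
    intro r
    rw [comp_assoc, mul_comp, C_comp, X_comp, ← mul_assoc, ← C_mul,
      mul_inv_cancel₀ hb, C_1, one_mul, comp_X]
  constructor
  · rintro ⟨h, rfl⟩
    exact ⟨h.comp (C b * X), mul_comp _ _ _⟩
  · rintro ⟨h, hh⟩
    refine ⟨h.comp (C b⁻¹ * X), ?_⟩
    have := congrArg (fun r : Polynomial F => r.comp (C b⁻¹ * X)) hh
    simpa [mul_comp, key] using this

/-- `Γ(α, g(x)) = Γ(a·α, g(a⁻¹·x))` for nonzero `a`, with Goppa-code membership
given by the divisibility criterion. -/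
theorem goppa_scale_support {m t n : ℕ} {F : Type*} [Field F] [Fintype F] [CharP F 2]
    (hcard : Fintype.card F = 2 ^ m)
    (α : Fin n → F) (hα : Function.Injective α)
    (g : Polynomial F) (hgdeg : g.natDegree = t) (hgα : ∀ i, g.eval (α i) ≠ 0)
    (a : F) (ha : a ≠ 0) :
    ∀ c : Fin n → ZMod 2,
      (g ∣ ∑ i ∈ Finset.univ.filter (fun i => c i = 1),
          ∏ j ∈ (Finset.univ.filter (fun i => c i = 1)).erase i, (X - C (α j)))
      ↔ (g.comp (C a⁻¹ * X) ∣ ∑ i ∈ Finset.univ.filter (fun i => c i = 1),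
          ∏ j ∈ (Finset.univ.filter (fun i => c i = 1)).erase i, (X - C (a * α j))) := by
  intro c
  set s := Finset.univ.filter (fun i => c i = 1) with hs
  have hb : (a⁻¹ : F) ≠ 0 := inv_ne_zero ha
  have hcomp : (∑ i ∈ s, ∏ j ∈ s.erase i, (X - C (α j))).comp (C a⁻¹ * X)
      = C (a⁻¹ ^ (s.card - 1)) * ∑ i ∈ s, ∏ j ∈ s.erase i, (X - C (a * α j)) := by
    rw [sum_comp, Finset.mul_sum]
    refine Finset.sum_congr rfl fun i hi => ?_
    rw [prod_comp]
    have : ∀ j ∈ s.erase i, (X - C (α j)).comp (C a⁻¹ * X)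
        = C a⁻¹ * (X - C (a * α j)) := by
      intro j _
      rw [sub_comp, X_comp, C_comp, mul_sub, ← C_mul, inv_mul_cancel_left₀ ha]
    rw [Finset.prod_congr rfl this, Finset.prod_mul_distrib, Finset.prod_const,
      Finset.card_erase_of_mem hi, ← C_pow]
  rw [dvd_comp_linear_iff a⁻¹ hb g, hcomp]
  have hu : IsUnit (C (a⁻¹ ^ (s.card - 1))) :=
    isUnit_C.mpr (IsUnit.pow _ (isUnit_iff_ne_zero.mpr hb))
  exact IsUnit.dvd_mul_left hu
end

section
/- With σ̃_p(x) = ε·x^d + σ_p(x) where σ_p(x) = Π_{i∈I_p}(x - α_i), and p̃ defined by p̃_i = 1 iff σ̃_p(α_i) = 0: either p = p̃ or the intersection I_p ∩ I_{p̃} has at most one element. -/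
open Polynomial

/-- With `σ̃_p(x) = ε·x^d + σ_p(x)` and `p̃` given by `p̃_i = 1 ↔ σ̃_p(α_i) = 0`,
either `p = p̃` (as supports) or `#(I_p ∩ I_{p̃}) ≤ 1`. -/
theorem fault_support_intersection {m n d : ℕ} {F : Type*} [Field F] [Fintype F] [DecidableEq F] [CharP F 2]
    (hcard : Fintype.card F = 2 ^ m)
    (α : Fin n → F) (hα : Function.Injective α)
    (p : Fin n → ZMod 2) (ε : F) :
    Finset.univ.filter (fun i => p i = 1) =
        Finset.univ.filter (fun i =>
          (C ε * X ^ d + ∏ k ∈ Finset.univ.filter (fun i => p i = 1), (X - C (α k))).eval (α i)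
            = 0)
      ∨ ((Finset.univ.filter (fun i => p i = 1)) ∩
          (Finset.univ.filter (fun i =>
            (C ε * X ^ d + ∏ k ∈ Finset.univ.filter (fun i => p i = 1),
              (X - C (α k))).eval (α i) = 0))).card ≤ 1 := by
  set Ip := Finset.univ.filter (fun i => p i = 1) with hIp
  have hprod : ∀ i : Fin n,
      (∏ k ∈ Ip, (X - C (α k))).eval (α i) = ∏ k ∈ Ip, (α i - α k) := by
    intro i; simp [eval_prod]
  by_cases hε : ε = 0
  · left
    subst hε
    ext i
    simp only [hIp, Finset.mem_filter, Finset.mem_univ, true_and, map_zero, zero_mul,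
      zero_add, hprod, Finset.prod_eq_zero_iff, eval_add, eval_mul, eval_pow, eval_X, eval_prod, eval_sub, eval_C]
    constructor
    · intro hi
      refine ⟨i, by simpa [hIp] using hi, by ring⟩
    · rintro ⟨k, hk, hik⟩
      have : α i = α k := by linear_combination hik
      have := hα this
      subst this
      simpa [hIp] using hk
  · right
    rw [Finset.card_le_one]
    intro a ha b hb
    have key : ∀ i, i ∈ Ip ∩ (Finset.univ.filter (fun i =>
        (C ε * X ^ d + ∏ k ∈ Ip, (X - C (α k))).eval (α i) = 0)) → α i = 0 := by
      intro i hi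
      simp only [Finset.mem_inter, Finset.mem_filter, Finset.mem_univ, true_and] at hi
      obtain ⟨hi1, hi2⟩ := hi
      have hz : (∏ k ∈ Ip, (α i - α k)) = 0 :=
        Finset.prod_eq_zero hi1 (by ring)
      rw [eval_add, eval_mul, eval_pow, eval_C, eval_X, hprod, hz, add_zero,
        mul_eq_zero] at hi2
      rcases hi2 with h | h
      · exact absurd h hε
      · exact (pow_eq_zero_iff'.mp h).1
    exact hα ((key a ha).trans (key b hb).symm)
end

section
/- With σ̃_p(x) = ε·x^d + σ_p(x), ε ≠ 0, and p̃ defined by p̃_i = 1 iff σ̃_p(α_i) = 0: I_p ∩ I_{p̃} = {i} for a single index i if and only if i ∈ I_p, α_i = 0, and d > 0. -/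
open Polynomial

/-- With `ε ≠ 0`: `I_p ∩ I_{p̃} = {i}` iff `i ∈ I_p`, `α_i = 0` and `d > 0`. -/
theorem fault_support_singleton_iff {m n d : ℕ} {F : Type*} [Field F] [Fintype F] [DecidableEq F] [CharP F 2]
    (hcard : Fintype.card F = 2 ^ m)
    (α : Fin n → F) (hα : Function.Injective α)
    (p : Fin n → ZMod 2) (hp : (Finset.univ.filter (fun i => p i = 1)).Nonempty)
    (ε : F) (hε : ε ≠ 0) (i : Fin n) :
    ((Finset.univ.filter (fun i => p i = 1)) ∩
        (Finset.univ.filter (fun j =>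
          (C ε * X ^ d + ∏ k ∈ Finset.univ.filter (fun i => p i = 1),
            (X - C (α k))).eval (α j) = 0)) = {i})
      ↔ (i ∈ Finset.univ.filter (fun i => p i = 1) ∧ α i = 0 ∧ 0 < d) := by
  have key : ∀ j : Fin n,
      j ∈ ((Finset.univ.filter (fun i => p i = 1)) ∩
        (Finset.univ.filter (fun j =>
          (C ε * X ^ d + ∏ k ∈ Finset.univ.filter (fun i => p i = 1),
            (X - C (α k))).eval (α j) = 0))) ↔ (p j = 1 ∧ α j = 0 ∧ 0 < d) := by
    intro j
    simp only [Finset.mem_inter, Finset.mem_filter, Finset.mem_univ, true_and]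
    constructor
    · rintro ⟨hj, hz⟩
      refine ⟨hj, ?_⟩
      have hprod : (∏ k ∈ Finset.univ.filter (fun i => p i = 1),
          (X - C (α k))).eval (α j) = 0 := by
        rw [eval_prod]
        exact Finset.prod_eq_zero (Finset.mem_filter.mpr ⟨Finset.mem_univ j, hj⟩) (by simp)
      rw [eval_add, eval_mul, eval_C, eval_pow, eval_X, hprod, add_zero,
        mul_eq_zero] at hz
      rcases hz with h | h
      · exact absurd h hε
      · rcases pow_eq_zero_iff'.mp h with ⟨h0, hd⟩
        exact ⟨h0, Nat.pos_of_ne_zero hd⟩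
    · rintro ⟨hj, h0, hd⟩
      refine ⟨hj, ?_⟩
      have hprod : (∏ k ∈ Finset.univ.filter (fun i => p i = 1),
          (X - C (α k))).eval (α j) = 0 := by
        rw [eval_prod]
        exact Finset.prod_eq_zero (Finset.mem_filter.mpr ⟨Finset.mem_univ j, hj⟩) (by simp)
      rw [eval_add, eval_mul, eval_C, eval_pow, eval_X, hprod, add_zero, h0,
        zero_pow hd.ne', mul_zero]
  constructor
  · intro h
    have hi : i ∈ _ := h ▸ Finset.mem_singleton_self i
    rcases (key i).mp hi with ⟨h1, h2, h3⟩
    exact ⟨Finset.mem_filter.mpr ⟨Finset.mem_univ i, h1⟩, h2, h3⟩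
  · rintro ⟨hi, h0, hd⟩
    have hi' := (Finset.mem_filter.mp hi).2
    ext j
    rw [key j, Finset.mem_singleton]
    constructor
    · rintro ⟨hj, hj0, _⟩
      exact hα (hj0.trans h0.symm)
    · rintro rfl
      exact ⟨hi', h0, hd⟩
end

section
/- For a binary irreducible Goppa code: if g ∈ F_{2^m}[x] is irreducible of degree t ≥ 1 and α is a support tuple, then Γ(α, g) = Γ(α, g^2). -/
open Polynomial

lemma second_derivative_char_two {F : Type*} [Field F] [CharP F 2] (f : Polynomial F) :
    derivative (derivative f) = 0 := by
  ext n
  rw [coeff_derivative, coeff_derivative, coeff_zero, mul_assoc]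
  have : ((n + 1 + 1 : ℕ) : F) * ((n + 1 : ℕ) : F) = 0 := by
    rw [← Nat.cast_mul, mul_comm, CharP.cast_eq_zero_iff F 2]
    exact (Nat.even_mul_succ_self (n + 1)).two_dvd
  push_cast at this ⊢
  rw [this, mul_zero]

lemma deriv_is_square {F : Type*} [Field F] [Fintype F] [CharP F 2] (f : Polynomial F) :
    ∃ h : Polynomial F, derivative f = h ^ 2 := by
  haveI := Fact.mk Nat.prime_two
  refine ⟨(Polynomial.contract 2 (derivative f)).map (frobeniusEquiv F 2).symm, ?_⟩
  rw [← polynomial_expand_eq,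
    Polynomial.expand_contract 2 (second_derivative_char_two f) two_ne_zero]

/-- For a binary irreducible Goppa code: `Γ(α,g) = Γ(α,g²)`. -/
theorem goppa_irreducible_square {m t n : ℕ} {F : Type*} [Field F] [Fintype F] [CharP F 2]
    (hcard : Fintype.card F = 2 ^ m)
    (α : Fin n → F) (hα : Function.Injective α)
    (g : Polynomial F) (hgirr : Irreducible g) (hgdeg : g.natDegree = t) (ht : 1 ≤ t)
    (hgα : ∀ i, g.eval (α i) ≠ 0) :
    ∀ c : Fin n → ZMod 2,
      (g ∣ ∑ i ∈ Finset.univ.filter (fun i => c i = 1),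
          ∏ j ∈ (Finset.univ.filter (fun i => c i = 1)).erase i, (X - C (α j)))
      ↔ (g ^ 2 ∣ ∑ i ∈ Finset.univ.filter (fun i => c i = 1),
          ∏ j ∈ (Finset.univ.filter (fun i => c i = 1)).erase i, (X - C (α j))) := by
  intro c
  set I := Finset.univ.filter (fun i => c i = 1) with hI
  have hs : (∑ i ∈ I, ∏ j ∈ I.erase i, (X - C (α j)))
      = derivative (∏ j ∈ I, (X - C (α j))) := by
    have hd := derivative_prod (s := I.val) (f := fun j => X - C (α j))
    simp only [derivative_sub, derivative_X, derivative_C, sub_zero, mul_one] at hd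
    rw [Finset.prod, hd, Finset.sum]
    congr 1
  obtain ⟨h, hh⟩ := deriv_is_square (∏ j ∈ I, (X - C (α j)))
  rw [hs, hh]
  constructor
  · intro hdvd
    exact pow_dvd_pow_of_dvd (hgirr.prime.dvd_of_dvd_pow hdvd) 2
  · intro hdvd
    exact dvd_trans (dvd_pow_self g two_ne_zero) hdvd
end

section
/- GoppaGCD soundness (core step): let C ⊆ F_2^n be generated by {c_1,...,c_k}, α̃ a support tuple, and g̃ = gcd(ŝ_{c_1,α̃},...,ŝ_{c_k,α̃}) with ŝ_{c,α̃}(x) = Σ_{i∈I_c} Π_{j∈I_c\{i}}(x − α̃_j). If g̃(α̃_i) ≠ 0 for all i, then C ⊆ Γ(α̃, g̃). -/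
open Polynomial

lemma sder_eq_deriv {n : ℕ} {F : Type*} [Field F] (αt : Fin n → F) (S : Finset (Fin n)) :
    ∑ i ∈ S, ∏ j ∈ S.erase i, (X - C (αt j)) =
      derivative (∏ i ∈ S, (X - C (αt i))) := by
  classical
  induction S using Finset.induction_on with
  | empty => simp
  | @insert a S ha ih =>
    rw [Finset.sum_insert ha, Finset.prod_insert ha, derivative_mul, derivative_X_sub_C,
      one_mul, ← ih, Finset.mul_sum, Finset.erase_insert ha]
    congr 1
    refine Finset.sum_congr rfl fun i hi => ?_
    rw [Finset.erase_insert_of_ne (fun h => ha (by rwa [h])),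
      Finset.prod_insert (fun hm => ha (Finset.mem_of_mem_erase hm))]

lemma prod_symmdiff {n : ℕ} {F : Type*} [Field F] (αt : Fin n → F) (I J : Finset (Fin n)) :
    (∏ i ∈ I, (X - C (αt i))) * ∏ i ∈ J, (X - C (αt i)) =
      ((∏ i ∈ (I \ J) ∪ (J \ I), (X - C (αt i))) *
        (∏ i ∈ I ∩ J, (X - C (αt i))) ^ 2) := by
  classical
  have e1 : ∏ i ∈ I, (X - C (αt i)) =
      (∏ i ∈ I \ J, (X - C (αt i))) * ∏ i ∈ I ∩ J, (X - C (αt i)) := by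
    rw [← Finset.prod_union (Finset.disjoint_sdiff_inter I J), Finset.sdiff_union_inter I J]
  have e2 : ∏ i ∈ J, (X - C (αt i)) =
      (∏ i ∈ J \ I, (X - C (αt i))) * ∏ i ∈ I ∩ J, (X - C (αt i)) := by
    rw [Finset.inter_comm, ← Finset.prod_union (Finset.disjoint_sdiff_inter J I),
      Finset.sdiff_union_inter J I]
  rw [e1, e2, Finset.prod_union (disjoint_sdiff_sdiff), sq]
  ring

lemma key_add {n : ℕ} {F : Type*} [Field F] [CharP F 2] (αt : Fin n → F)
    (gt : Polynomial F) (hgα : ∀ i, gt.eval (αt i) ≠ 0) (I J : Finset (Fin n))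
    (hI : gt ∣ ∑ i ∈ I, ∏ j ∈ I.erase i, (X - C (αt j)))
    (hJ : gt ∣ ∑ i ∈ J, ∏ j ∈ J.erase i, (X - C (αt j))) :
    gt ∣ ∑ i ∈ (I \ J) ∪ (J \ I), ∏ j ∈ ((I \ J) ∪ (J \ I)).erase i, (X - C (αt j)) := by
  classical
  rw [sder_eq_deriv] at hI hJ ⊢
  have hcop : IsCoprime gt ((∏ i ∈ I ∩ J, (X - C (αt i))) ^ 2) := by
    refine IsCoprime.pow_right ?_
    refine IsCoprime.prod_right fun i _ => ?_
    have hirr : Irreducible (X - C (αt i)) := irreducible_X_sub_C (αt i)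
    exact (hirr.coprime_iff_not_dvd.mpr
      (fun h => hgα i (by simpa using (dvd_iff_isRoot.mp h)))).symm
  have hdvd : gt ∣ derivative ((∏ i ∈ I, (X - C (αt i))) * ∏ i ∈ J, (X - C (αt i))) := by
    rw [derivative_mul]
    exact dvd_add (Dvd.dvd.mul_right hI _) (Dvd.dvd.mul_left hJ _)
  rw [prod_symmdiff, derivative_mul] at hdvd
  have h2 : derivative ((∏ i ∈ I ∩ J, (X - C (αt i))) ^ 2) = 0 := by
    rw [sq, derivative_mul, mul_comm (derivative _)]
    exact CharTwo.add_self_eq_zero _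
  rw [h2, mul_zero, add_zero] at hdvd
  exact hcop.dvd_of_dvd_mul_right hdvd

/-- GoppaGCD soundness (core step): if `g̃` divides each `ŝ_{c_l,α̃}` for a spanning family
`c_1,…,c_k` of `C` (as the gcd does) and `g̃(α̃_i) ≠ 0` for all `i`, then `C ⊆ Γ(α̃,g̃)`. -/
theorem goppaGCD_sound {m n k : ℕ} {F : Type*} [Field F] [Fintype F] [CharP F 2]
    (hcard : Fintype.card F = 2 ^ m)
    (αt : Fin n → F) (hαt : Function.Injective αt)
    (c : Fin k → (Fin n → ZMod 2))
    (gt : Polynomial F)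
    (hdvd : ∀ l : Fin k, gt ∣ ∑ i ∈ Finset.univ.filter (fun i => c l i = 1),
        ∏ j ∈ (Finset.univ.filter (fun i => c l i = 1)).erase i, (X - C (αt j)))
    (hgα : ∀ i, gt.eval (αt i) ≠ 0) :
    ∀ v ∈ Submodule.span (ZMod 2) (Set.range c),
      gt ∣ ∑ i ∈ Finset.univ.filter (fun i => v i = 1),
        ∏ j ∈ (Finset.univ.filter (fun i => v i = 1)).erase i, (X - C (αt j)) := by
  classical
  intro v hv
  induction hv using Submodule.span_induction with
  | mem x hx => obtain ⟨l, rfl⟩ := hx; exact hdvd l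
  | zero => simp
  | add x y hx hy ihx ihy =>
    have hset : Finset.univ.filter (fun i => (x + y) i = 1) =
        (Finset.univ.filter (fun i => x i = 1) \ Finset.univ.filter (fun i => y i = 1)) ∪
        (Finset.univ.filter (fun i => y i = 1) \ Finset.univ.filter (fun i => x i = 1)) := by
      ext i
      have : ∀ a b : ZMod 2, (a + b = 1) ↔ ((a = 1 ∧ ¬ b = 1) ∨ (b = 1 ∧ ¬ a = 1)) := by decide
      simp [this (x i) (y i)]
    rw [hset]
    exact key_add αt gt hgα _ _ ihx ihy
  | smul a x hx ihx =>
    fin_cases a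
    · change gt ∣ ∑ i ∈ Finset.univ.filter (fun i => ((0 : ZMod 2) • x) i = 1),
          ∏ j ∈ (Finset.univ.filter (fun i => ((0 : ZMod 2) • x) i = 1)).erase i, (X - C (αt j))
      simpa using (dvd_zero gt)
    · change gt ∣ ∑ i ∈ Finset.univ.filter (fun i => ((1 : ZMod 2) • x) i = 1),
          ∏ j ∈ (Finset.univ.filter (fun i => ((1 : ZMod 2) • x) i = 1)).erase i, (X - C (αt j))
      simpa using ihx
end
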